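/- Let K_h and K̄ be symmetric positive semidefinite n×n matrices, λ > 0, M = (K_h+λI)^{-1} − (K̄+λI)^{-1}, and Y ∈ ℝ^n with ‖Y‖₂ ≤ √n. Then Yᵀ(K_h+λI)^{-1}K_h(K_h+λI)^{-1}Y − Yᵀ(K̄+λI)^{-1}K̄(K̄+λI)^{-1}Y ≤ n(1 + λ‖M‖₂)‖M‖₂. -/

import Mathlib

open Matrix

/-- The spectral (ℓ²-operator) norm of a real square matrix. -/
noncomputable def spectralNormL2 {n : ℕ} (A : Matrix (Fin n) (Fin n) ℝ) : ℝ :=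
  ‖Matrix.toEuclideanCLM (𝕜 := ℝ) A‖

section aux
variable {n : ℕ} {K : Matrix (Fin n) (Fin n) ℝ} {lam : ℝ}

lemma smul_one_posDef (hlam : 0 < lam) : (lam • (1 : Matrix (Fin n) (Fin n) ℝ)).PosDef := by
  constructor
  · simp [Matrix.IsHermitian]
  · intro x hx
    exact ((Matrix.PosDef.one).smul hlam).2 hx

lemma reg_posDef (hK : K.PosSemidef) (hlam : 0 < lam) :
    (K + lam • (1 : Matrix (Fin n) (Fin n) ℝ)).PosDef :=
  Matrix.PosDef.posSemidef_add hK (smul_one_posDef hlam)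

lemma key_identity (hK : K.PosSemidef) (hlam : 0 < lam) :
    (K + lam • 1)⁻¹ * K * (K + lam • 1)⁻¹
      = (K + lam • 1)⁻¹ - lam • ((K + lam • 1)⁻¹ * (K + lam • 1)⁻¹) := by
  have hU := (reg_posDef hK hlam).isUnit
  have h1 : (K + lam • 1)⁻¹ * (K + lam • 1) = 1 :=
    Matrix.nonsing_inv_mul _ ((Matrix.isUnit_iff_isUnit_det _).mp hU)
  set A := (K + lam • 1)⁻¹ with hA
  have hKeq : K = (K + lam • 1) - lam • 1 := by abel
  calc A * K * A
      = (A * (K + lam • 1)) * A - lam • (A * A) := by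
        conv_lhs => rw [hKeq]
        rw [Matrix.mul_sub, Matrix.sub_mul, Matrix.mul_smul, mul_one, Matrix.smul_mul]
    _ = _ := by rw [h1, one_mul]
end aux

open scoped RealInnerProductSpace

lemma inner_bridge {n : ℕ} (A : Matrix (Fin n) (Fin n) ℝ) (x : EuclideanSpace ℝ (Fin n)) :
    ⟪x, (Matrix.toEuclideanCLM (𝕜 := ℝ) A) x⟫ =
      (WithLp.equiv 2 (Fin n → ℝ) x) ⬝ᵥ (A *ᵥ (WithLp.equiv 2 (Fin n → ℝ) x)) := by
  simp only [PiLp.inner_apply, RCLike.inner_apply, conj_trivial]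
  refine Finset.sum_congr rfl fun i _ => ?_
  exact mul_comm _ _

lemma norm_contraction {n : ℕ} {K : Matrix (Fin n) (Fin n) ℝ} {lam : ℝ}
    (hK : K.PosSemidef) (hlam : 0 < lam) :
    spectralNormL2 ((1 : Matrix (Fin n) (Fin n) ℝ) - (2*lam) • (K + lam • 1)⁻¹) ≤ 1 := by
  set A := (K + lam • 1)⁻¹ with hA
  set C : Matrix (Fin n) (Fin n) ℝ := 1 - (2*lam) • A with hC
  have hApd : A.PosDef := (reg_posDef hK hlam).inv
  have hAherm : Aᴴ = A := hApd.isHermitian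
  have hAKA : (A * K * A).PosSemidef := by
    have := hK.conjTranspose_mul_mul_same A
    rwa [hAherm] at this
  have hid : A * K * A = A - lam • (A * A) := key_identity hK hlam
  have hCC : C * C = 1 - (4*lam) • (A * K * A) := by
    rw [hid, hC]
    simp only [sub_mul, mul_sub, smul_sub, smul_smul, Matrix.smul_mul, Matrix.mul_smul,
      mul_one, one_mul]
    module
  have hAt : Aᵀ = A := by simpa using hAherm
  have hCherm : Cᴴ = C := by
    rw [hC]
    simp [Matrix.conjTranspose_smul, hAt]
  rw [spectralNormL2]
  apply ContinuousLinearMap.opNorm_le_bound _ zero_le_one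
  intro x
  rw [one_mul]
  set T := Matrix.toEuclideanCLM (𝕜 := ℝ) C with hT
  have hstar : star C = C := by rw [Matrix.star_eq_conjTranspose, hCherm]
  have hadj : ContinuousLinearMap.adjoint T = T := by
    rw [← ContinuousLinearMap.star_eq_adjoint, hT, ← map_star, hstar]
  have hsq : ‖T x‖ ^ 2 ≤ ‖x‖ ^ 2 := by
    have h1 : ‖T x‖ ^ 2 = ⟪x, (Matrix.toEuclideanCLM (𝕜 := ℝ) (C * C)) x⟫ := by
      rw [← real_inner_self_eq_norm_sq, ← ContinuousLinearMap.adjoint_inner_right, hadj,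
        _root_.map_mul]
      rfl
    rw [h1, inner_bridge, hCC]
    set v := WithLp.equiv 2 (Fin n → ℝ) x with hv
    have hpsd : 0 ≤ v ⬝ᵥ ((A * K * A) *ᵥ v) := by
      have := hAKA.dotProduct_mulVec_nonneg v
      simpa using this
    have : v ⬝ᵥ ((1 - (4*lam) • (A * K * A)) *ᵥ v)
        = v ⬝ᵥ v - (4*lam) * (v ⬝ᵥ ((A * K * A) *ᵥ v)) := by
      rw [Matrix.sub_mulVec, dotProduct_sub, Matrix.smul_mulVec, dotProduct_smul,
        Matrix.one_mulVec, smul_eq_mul]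
    rw [this]
    have hxx : v ⬝ᵥ v = ‖x‖ ^ 2 := by
      rw [← real_inner_self_eq_norm_sq]
      simp only [hv, dotProduct, PiLp.inner_apply, RCLike.inner_apply, conj_trivial]
      rfl
    rw [hxx]
    nlinarith [hpsd, hlam]
  have := Real.sqrt_le_sqrt hsq
  rwa [Real.sqrt_sq (norm_nonneg _), Real.sqrt_sq (norm_nonneg _)] at this

set_option synthInstance.maxHeartbeats 1000000
set_option maxHeartbeats 2000000

/-- Quadratic form difference bound:
`Yᵀ(K_h+λI)⁻¹K_h(K_h+λI)⁻¹Y − Yᵀ(K̄+λI)⁻¹K̄(K̄+λI)⁻¹Y ≤ n(1 + λ‖M‖₂)‖M‖₂`. -/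
theorem quadratic_form_difference_bound
    (n : ℕ) (Kh Kbar : Matrix (Fin n) (Fin n) ℝ)
    (hKh : Kh.PosSemidef) (hKbar : Kbar.PosSemidef)
    (lam : ℝ) (hlam : 0 < lam)
    (Y : Fin n → ℝ) (hY : Real.sqrt (∑ i, (Y i) ^ 2) ≤ Real.sqrt n) :
    Y ⬝ᵥ (((Kh + lam • (1 : Matrix (Fin n) (Fin n) ℝ))⁻¹ * Kh *
            (Kh + lam • (1 : Matrix (Fin n) (Fin n) ℝ))⁻¹) *ᵥ Y)
      - Y ⬝ᵥ (((Kbar + lam • (1 : Matrix (Fin n) (Fin n) ℝ))⁻¹ * Kbar *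
            (Kbar + lam • (1 : Matrix (Fin n) (Fin n) ℝ))⁻¹) *ᵥ Y)
    ≤ n * (1 + lam * spectralNormL2 ((Kh + lam • (1 : Matrix (Fin n) (Fin n) ℝ))⁻¹
            - (Kbar + lam • (1 : Matrix (Fin n) (Fin n) ℝ))⁻¹))
        * spectralNormL2 ((Kh + lam • (1 : Matrix (Fin n) (Fin n) ℝ))⁻¹
            - (Kbar + lam • (1 : Matrix (Fin n) (Fin n) ℝ))⁻¹) := by
  set A := (Kh + lam • (1 : Matrix (Fin n) (Fin n) ℝ))⁻¹ with hA
  set B := (Kbar + lam • (1 : Matrix (Fin n) (Fin n) ℝ))⁻¹ with hB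
  set M := A - B with hM
  set C1 : Matrix (Fin n) (Fin n) ℝ := 1 - (2*lam) • A with hC1
  set C2 : Matrix (Fin n) (Fin n) ℝ := 1 - (2*lam) • B with hC2
  have hidA : A * Kh * A = A - lam • (A*A) := key_identity hKh hlam
  have hidB : B * Kbar * B = B - lam • (B*B) := key_identity hKbar hlam
  have hD : A * Kh * A - B * Kbar * B = (2⁻¹ : ℝ) • (C1 * M + M * C2) := by
    rw [hidA, hidB, hM, hC1, hC2]
    simp only [sub_mul, mul_sub, smul_sub, smul_add, smul_smul, Matrix.smul_mul,
      Matrix.mul_smul, one_mul, mul_one]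
    module
  set D := A * Kh * A - B * Kbar * B with hDdef
  have hLHS : Y ⬝ᵥ ((A * Kh * A) *ᵥ Y) - Y ⬝ᵥ ((B * Kbar * B) *ᵥ Y)
      = Y ⬝ᵥ (D *ᵥ Y) := by
    rw [hDdef, Matrix.sub_mulVec, dotProduct_sub]
  have hMnn : 0 ≤ spectralNormL2 M := norm_nonneg _
  have hC1le : spectralNormL2 C1 ≤ 1 := norm_contraction hKh hlam
  have hC2le : spectralNormL2 C2 ≤ 1 := norm_contraction hKbar hlam
  have hnD : spectralNormL2 D ≤ spectralNormL2 M := by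
    calc spectralNormL2 D = ‖Matrix.toEuclideanCLM (𝕜 := ℝ) ((2⁻¹ : ℝ) • (C1 * M + M * C2))‖ := by
          rw [spectralNormL2, hD]
      _ ≤ 2⁻¹ * ‖Matrix.toEuclideanCLM (𝕜 := ℝ) C1 * Matrix.toEuclideanCLM (𝕜 := ℝ) M
            + Matrix.toEuclideanCLM (𝕜 := ℝ) M * Matrix.toEuclideanCLM (𝕜 := ℝ) C2‖ := by
          rw [_root_.map_smul, map_add, _root_.map_mul, _root_.map_mul]
          have := ContinuousLinearMap.opNorm_smul_le (2⁻¹:ℝ)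
            (Matrix.toEuclideanCLM (𝕜 := ℝ) C1 * Matrix.toEuclideanCLM (𝕜 := ℝ) M
              + Matrix.toEuclideanCLM (𝕜 := ℝ) M * Matrix.toEuclideanCLM (𝕜 := ℝ) C2)
          simpa using this
      _ ≤ 2⁻¹ * (‖Matrix.toEuclideanCLM (𝕜 := ℝ) C1‖ * ‖Matrix.toEuclideanCLM (𝕜 := ℝ) M‖
            + ‖Matrix.toEuclideanCLM (𝕜 := ℝ) M‖ * ‖Matrix.toEuclideanCLM (𝕜 := ℝ) C2‖) := by
          have := norm_add_le (Matrix.toEuclideanCLM (𝕜 := ℝ) C1 * Matrix.toEuclideanCLM (𝕜 := ℝ) M)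
            (Matrix.toEuclideanCLM (𝕜 := ℝ) M * Matrix.toEuclideanCLM (𝕜 := ℝ) C2)
          have h1 := norm_mul_le (Matrix.toEuclideanCLM (𝕜 := ℝ) C1) (Matrix.toEuclideanCLM (𝕜 := ℝ) M)
          have h2 := norm_mul_le (Matrix.toEuclideanCLM (𝕜 := ℝ) M) (Matrix.toEuclideanCLM (𝕜 := ℝ) C2)
          linarith
      _ ≤ 2⁻¹ * (1 * spectralNormL2 M + spectralNormL2 M * 1) := by
          have : (0:ℝ) ≤ ‖Matrix.toEuclideanCLM (𝕜 := ℝ) M‖ := norm_nonneg _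
          have h1 : ‖Matrix.toEuclideanCLM (𝕜 := ℝ) C1‖ ≤ 1 := hC1le
          have h2 : ‖Matrix.toEuclideanCLM (𝕜 := ℝ) C2‖ ≤ 1 := hC2le
          have h3 : ‖Matrix.toEuclideanCLM (𝕜 := ℝ) M‖ = spectralNormL2 M := rfl
          nlinarith [norm_nonneg (Matrix.toEuclideanCLM (𝕜 := ℝ) C1),
            norm_nonneg (Matrix.toEuclideanCLM (𝕜 := ℝ) C2)]
      _ = spectralNormL2 M := by ring
  -- quadratic bound
  set y : EuclideanSpace ℝ (Fin n) := (WithLp.equiv 2 (Fin n → ℝ)).symm Y with hy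
  have hyY : WithLp.equiv 2 (Fin n → ℝ) y = Y := rfl
  have hynorm : ‖y‖ ≤ Real.sqrt n := by
    rw [EuclideanSpace.norm_eq]
    simpa [hy, WithLp.equiv_symm_apply, Real.norm_eq_abs, sq_abs] using hY
  have hysq : ‖y‖ ^ 2 ≤ (n : ℝ) := by
    have h0 : (0:ℝ) ≤ ‖y‖ := norm_nonneg _
    have := pow_le_pow_left₀ h0 hynorm 2
    rwa [Real.sq_sqrt (Nat.cast_nonneg n)] at this
  have hquad : Y ⬝ᵥ (D *ᵥ Y) ≤ spectralNormL2 D * n := by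
    have hb : Y ⬝ᵥ (D *ᵥ Y) = ⟪y, (Matrix.toEuclideanCLM (𝕜 := ℝ) D) y⟫ := by
      rw [inner_bridge, hyY]
    rw [hb]
    calc ⟪y, (Matrix.toEuclideanCLM (𝕜 := ℝ) D) y⟫
        ≤ ‖y‖ * ‖(Matrix.toEuclideanCLM (𝕜 := ℝ) D) y‖ := real_inner_le_norm _ _
      _ ≤ ‖y‖ * (‖Matrix.toEuclideanCLM (𝕜 := ℝ) D‖ * ‖y‖) := by
          have := ContinuousLinearMap.le_opNorm (Matrix.toEuclideanCLM (𝕜 := ℝ) D) y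
          exact mul_le_mul_of_nonneg_left this (norm_nonneg _)
      _ = spectralNormL2 D * ‖y‖ ^ 2 := by rw [spectralNormL2]; ring
      _ ≤ spectralNormL2 D * n := by
          apply mul_le_mul_of_nonneg_left hysq (norm_nonneg _)
  rw [hLHS]
  have hfin : spectralNormL2 D * n ≤ n * (1 + lam * spectralNormL2 M) * spectralNormL2 M := by
    have hn : (0:ℝ) ≤ n := Nat.cast_nonneg n
    nlinarith [mul_le_mul_of_nonneg_right hnD hn,
      mul_nonneg (mul_nonneg hn hlam.le) (mul_nonneg hMnn hMnn)]
  linarith
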